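/- Let S be a local ring of characteristic p > 0 with maximal ideal M, and let q be a power of p. Assume M is finitely generated, and that dim_k(S/S·M^q) = n < q, where k = φ_q(S)/φ_q(M) and S is viewed as a module over φ_q(S). Then S has length ≤ n as an S-module. -/

import Mathlib

set_option synthInstance.maxHeartbeats 1000000
set_option maxHeartbeats 1000000

open IsLocalRing Module Submodule in
private lemma aux14 {S : Type*} [CommRing S] [IsLocalRing S]
    (p : ℕ) (hp : p.Prime) (hchar : CharP S p) (e n : ℕ)
    (x : Fin n → S)
    (hgen : ∀ s : S, ∃ b : Fin n → S,
      s - ∑ i, b i ^ p ^ e * x i ∈ IsLocalRing.maximalIdeal S ^ p ^ e)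
    (m : ℕ) (c : Fin (m + 1) → Ideal S)
    (hc : StrictMono c)
    (hle : ∀ i, IsLocalRing.maximalIdeal S ^ p ^ e ≤ c i) :
    m ≤ n := by
  classical
  haveI : ExpChar S p := .prime hp
  set φ : S →+* S := iterateFrobenius S p e with hφdef
  have hφ : ∀ t : S, φ t = t ^ p ^ e := fun t => iterateFrobenius_def p e t
  set R : Subring S := φ.range with hR
  haveI : Nontrivial R := nontrivial_of_ne 0 1 (fun h => by
    have := congrArg (Subtype.val) h
    simp at this)
  haveI : IsLocalRing R := .of_surjective' φ.rangeRestrict φ.rangeRestrict_surjective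
  haveI : (maximalIdeal R).IsMaximal := maximalIdeal.isMaximal R
  -- elements of the maximal ideal of R lie in M^q
  have hmR : ∀ r : R, r ∈ maximalIdeal R → (r : S) ∈ maximalIdeal S ^ p ^ e := by
    intro r hr
    obtain ⟨t, ht⟩ := RingHom.mem_range.mp r.2
    have htM : t ∈ maximalIdeal S := by
      by_contra hts
      have hut : IsUnit t := by
        rw [mem_maximalIdeal, mem_nonunits_iff, not_not] at hts; exact hts
      obtain ⟨u, rfl⟩ := hut
      have : IsUnit r := by
        refine IsUnit.of_mul_eq_one (a := r) ⟨φ ((u⁻¹ : Sˣ) : S), φ.mem_range_self _⟩ ?_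
        apply Subtype.ext
        show (r : S) * φ ((u⁻¹ : Sˣ) : S) = 1
        rw [← ht, ← map_mul, Units.mul_inv, map_one]
      exact mem_nonunits_iff.mp ((mem_maximalIdeal r).mp hr) this
    rw [← ht, hφ]
    exact Ideal.pow_mem_pow htM _
  -- the quotient V = S / M^q as a vector space over k = R / m_R
  set Mq : Submodule R S :=
    Submodule.restrictScalars R (maximalIdeal S ^ p ^ e : Ideal S) with hMq
  set V := S ⧸ Mq with hV
  have htor : Module.IsTorsionBySet R V (maximalIdeal R : Set R) := by
    refine (Module.isTorsionBySet_quotient_iff Mq _).mpr fun s r hr => ?_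
    show (r : S) * s ∈ (maximalIdeal S ^ p ^ e : Ideal S)
    exact Ideal.mul_mem_right s _ (hmR r hr)
  letI k := R ⧸ maximalIdeal R
  letI : Field k := Ideal.Quotient.field _
  letI : Module k V := htor.module
  -- the images of the x i span V over k
  have hspan : Submodule.span k (Set.range fun i => Mq.mkQ (x i)) = ⊤ := by
    rw [eq_top_iff]
    rintro v -
    obtain ⟨s, rfl⟩ := Mq.mkQ_surjective v
    obtain ⟨b, hb⟩ := hgen s
    have key : Mq.mkQ s = ∑ i,
        (Ideal.Quotient.mk (maximalIdeal R) ⟨φ (b i), φ.mem_range_self _⟩ : k) • Mq.mkQ (x i) := by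
      have h1 : Mq.mkQ s = Mq.mkQ (∑ i, b i ^ p ^ e * x i) := by
        rw [Submodule.mkQ_apply, Submodule.mkQ_apply]
        exact (Submodule.Quotient.eq Mq).mpr hb
      rw [h1, map_sum]
      refine Finset.sum_congr rfl fun i _ => ?_
      rw [htor.mk_smul]
      show Mq.mkQ (b i ^ p ^ e * x i)
          = (⟨φ (b i), φ.mem_range_self _⟩ : R) • Mq.mkQ (x i)
      rw [← map_smul]
      congr 1
    rw [key]
    exact Submodule.sum_mem _ fun i _ =>
      Submodule.smul_mem _ _ (Submodule.subset_span ⟨i, rfl⟩)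
  haveI : FiniteDimensional k V :=
    ⟨⟨Finset.image (fun i => Mq.mkQ (x i)) Finset.univ, by
      rw [Finset.coe_image, Finset.coe_univ, Set.image_univ]; exact hspan⟩⟩
  have hdim : Module.finrank k V ≤ n := by
    simpa using finrank_le_of_span_eq_top hspan
  -- push ideals of S forward to k-subspaces of V
  let F : Ideal S → Submodule k V := fun I =>
    { carrier := Mq.mkQ '' (I : Set S)
      add_mem' := by
        rintro a b ⟨s, hs, rfl⟩ ⟨t, ht, rfl⟩
        exact ⟨s + t, I.add_mem hs ht, map_add _ _ _⟩
      zero_mem' := ⟨0, I.zero_mem, map_zero _⟩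
      smul_mem' := by
        rintro a v ⟨s, hs, rfl⟩
        obtain ⟨r, rfl⟩ := Ideal.Quotient.mk_surjective a
        refine ⟨(r : S) * s, I.mul_mem_left _ hs, ?_⟩
        rw [htor.mk_smul]
        show Mq.mkQ ((r : S) * s) = r • Mq.mkQ s
        rw [← map_smul]
        rfl }
  have hFlt : ∀ {I J : Ideal S}, maximalIdeal S ^ p ^ e ≤ I → I < J → F I < F J := by
    intro I J hMI hIJ
    have hle' : F I ≤ F J := by
      rintro v ⟨s, hs, rfl⟩
      exact ⟨s, hIJ.le hs, rfl⟩
    refine lt_of_le_of_ne hle' (fun hEq => hIJ.ne ?_)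
    refine le_antisymm hIJ.le (fun s hs => ?_)
    have : Mq.mkQ s ∈ F I := hEq ▸ ⟨s, hs, rfl⟩
    obtain ⟨t, ht, hts⟩ := this
    have hsub : t - s ∈ (maximalIdeal S ^ p ^ e : Ideal S) := by
      exact (Submodule.Quotient.eq Mq).mp hts
    have : s = t - (t - s) := by ring
    rw [this]
    exact I.sub_mem ht (hMI hsub)
  -- counting via finrank
  have hmono : StrictMono fun i => Module.finrank k (F (c i)) := fun i j hij =>
    Submodule.finrank_lt_finrank_of_lt (hFlt (hle i) (hc hij))
  let g : Fin (m + 1) → Fin (n + 1) := fun i =>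
    ⟨Module.finrank k (F (c i)), by
      have h1 := Submodule.finrank_le (F (c i))
      omega⟩
  have hg : Function.Injective g := by
    intro i j hij
    exact hmono.injective (congrArg Fin.val hij)
  have := Fintype.card_le_of_injective g hg
  simpa using this

open IsLocalRing in
/-- Let `S` be a local ring of characteristic `p > 0`, with finitely generated
maximal ideal `M`, and `q = p^e`. If `dim_k (S/S·M^q) = n < q`, where
`k = φ_q(S)/φ_q(M)` (expressed via a `k`-basis of `S/S·M^q` of size `n`, with
coefficients from `φ_q(S)` and relations modulo `φ_q(M)`), then `S` has length
`≤ n` as an `S`-module. -/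
theorem stmt_14 {S : Type*} [CommRing S] [IsLocalRing S]
    (p : ℕ) (hp : p.Prime) (hchar : CharP S p) (e n : ℕ)
    (hfg : (IsLocalRing.maximalIdeal S).FG)
    (x : Fin n → S)
    (hgen : ∀ s : S, ∃ b : Fin n → S,
      s - ∑ i, b i ^ p ^ e * x i ∈ IsLocalRing.maximalIdeal S ^ p ^ e)
    (hindep : ∀ b : Fin n → S,
      (∑ i, b i ^ p ^ e * x i) ∈ IsLocalRing.maximalIdeal S ^ p ^ e →
      ∀ i, ∃ m ∈ IsLocalRing.maximalIdeal S, b i ^ p ^ e = m ^ p ^ e)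
    (hnq : n < p ^ e) :
    ∀ c : Fin (n + 2) → Ideal S, ¬ StrictMono c := by
  intro c hc
  set q := p ^ e with hq
  -- Step 1 : some power of M stabilizes before q
  have hex : ∃ i, i < q ∧ maximalIdeal S ^ i ≤ maximalIdeal S ^ (i + 1) := by
    by_contra h
    push_neg at h
    have hsm : StrictMono (fun i : Fin (q + 1) => maximalIdeal S ^ (q - (i : ℕ))) := by
      intro i j hij
      have hj : (j : ℕ) ≤ q := Nat.lt_succ_iff.mp j.isLt
      have hij' : (i : ℕ) < (j : ℕ) := hij
      have hbq : q - (j : ℕ) < q := by omega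
      have hstep : maximalIdeal S ^ (q - (j : ℕ) + 1) < maximalIdeal S ^ (q - (j : ℕ)) :=
        lt_of_le_not_ge (Ideal.pow_le_pow_right (Nat.le_succ _)) (h _ hbq)
      exact lt_of_le_of_lt
        (Ideal.pow_le_pow_right (by omega : q - (j : ℕ) + 1 ≤ q - (i : ℕ))) hstep
    have := aux14 p hp hchar e n x hgen q _ hsm
      (fun i => Ideal.pow_le_pow_right (Nat.sub_le q i))
    omega
  obtain ⟨i, hiq, hlei⟩ := hex
  have hMi : maximalIdeal S ^ i = ⊥ := by
    refine Submodule.eq_bot_of_le_smul_of_le_jacobson_bot (maximalIdeal S) _ (Submodule.FG.pow hfg i)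
      ?_ (IsLocalRing.maximalIdeal_le_jacobson ⊥)
    have : maximalIdeal S • (maximalIdeal S ^ i : Ideal S)
        = maximalIdeal S ^ (i + 1) := by
      rw [smul_eq_mul, pow_succ, mul_comm]
    rw [this]
    exact hlei
  have hMq : maximalIdeal S ^ q = ⊥ :=
    le_bot_iff.mp ((Ideal.pow_le_pow_right hiq.le).trans hMi.le)
  have := aux14 p hp hchar e n x hgen (n + 1) c hc (fun j => by rw [hMq]; exact bot_le)
  omega
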